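/- For ε > 0 let Ω_ε = {ξ ∈ ℝ³ : |ξ₃| < ε √(ξ₁² + ξ₂²)}. Let 0 < ε < 1 and let v ∈ L²(ℝ³;ℝ³) be such that ∫_{ℝ³} (2π|ξ|)^{−1} |v̂(ξ)|² dξ < ∞, ξ · v̂(ξ) = 0 for almost every ξ ∈ ℝ³, and v̂ = 0 almost everywhere on Ω_ε. Then ‖v‖_{Ḣ^{−1/2}} ≤ (√2/ε) ‖v_h‖_{Ḣ^{−1/2}}, where v_h = (v₁, v₂, 0). -/

import Mathlib

open MeasureTheory Real SchwartzMap
open scoped FourierTransform ENNReal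

noncomputable section

/-- Euclidean three-space. -/
abbrev E3 : Type := EuclideanSpace ℝ (Fin 3)

/-- The heat kernel `G(x,t) = (4πt)^{-3/2} exp(−|x|²/(4t))` on `ℝ³`. -/
def heatKernel (t : ℝ) (x : E3) : ℝ :=
  (4 * π * t) ^ (-(3 : ℝ) / 2) * Real.exp (-‖x‖ ^ 2 / (4 * t))

/-- The heat semigroup `e^{tΔ}f = G(·,t) * f` applied to a complex-valued function. -/
def heatC (t : ℝ) (f : E3 → ℂ) : E3 → ℂ :=
  fun x => ∫ y : E3, (heatKernel t (x - y) : ℂ) * f y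

/-- The heat semigroup `e^{tΔ}` applied componentwise to a vector field. -/
def heatV (t : ℝ) (v : Fin 3 → E3 → ℝ) : E3 → E3 :=
  fun x => (EuclideanSpace.equiv (Fin 3) ℝ).symm
    (fun i => ∫ y : E3, heatKernel t (x - y) * v i y)

/-- `F` is the (distributional/L²) Fourier transform of `f`: both are in `L²` and
`∫ F φ = ∫ f 𝓕φ` for every Schwartz function `φ` (multiplication formula), which
uniquely characterizes the Fourier transform of an `L²` function. -/
def HasFT (f F : E3 → ℂ) : Prop :=
  MemLp f 2 volume ∧ MemLp F 2 volume ∧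
    ∀ φ : 𝓢(E3, ℂ), ∫ ξ : E3, F ξ * φ ξ = ∫ x : E3, f x * 𝓕 (⇑φ) x

/-- The conical region `Ω_ε = {ξ ∈ ℝ³ : |ξ₃| < ε √(ξ₁² + ξ₂²)}`. -/
def Omega (ε : ℝ) : Set E3 :=
  {ξ : E3 | |ξ 2| < ε * Real.sqrt ((ξ 0) ^ 2 + (ξ 1) ^ 2)}

set_option maxHeartbeats 1000000 in
lemma key (ε : ℝ) (hε0 : 0 < ε) (hε1 : ε < 1) (ξ : E3) (hξ : ξ ≠ 0)
    (W : Fin 3 → ℂ) (hdf : ∑ i, (ξ i : ℂ) * W i = 0)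
    (hsupp : ξ ∈ Omega ε → ∀ i, W i = 0) :
    ∑ i, ‖W i‖ ^ 2 ≤ (2 / ε ^ 2) * (‖W 0‖ ^ 2 + ‖W 1‖ ^ 2) := by
  rw [Fin.sum_univ_three]
  by_cases hΩ : ξ ∈ Omega ε
  · simp [hsupp hΩ 0, hsupp hΩ 1, hsupp hΩ 2]
  · have hcone : ε * Real.sqrt ((ξ 0) ^ 2 + (ξ 1) ^ 2) ≤ |ξ 2| := not_lt.1 hΩ
    rw [Fin.sum_univ_three] at hdf
    have hW2 : (ξ 2 : ℂ) * W 2 = -((ξ 0 : ℂ) * W 0 + (ξ 1 : ℂ) * W 1) := by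
      linear_combination hdf
    have hn : |ξ 2| * ‖W 2‖ ≤ |ξ 0| * ‖W 0‖ + |ξ 1| * ‖W 1‖ := by
      calc |ξ 2| * ‖W 2‖ = ‖(ξ 2 : ℂ) * W 2‖ := by
            rw [norm_mul, Complex.norm_real, Real.norm_eq_abs]
        _ = ‖(ξ 0 : ℂ) * W 0 + (ξ 1 : ℂ) * W 1‖ := by rw [hW2, norm_neg]
        _ ≤ ‖(ξ 0 : ℂ) * W 0‖ + ‖(ξ 1 : ℂ) * W 1‖ := norm_add_le _ _
        _ = |ξ 0| * ‖W 0‖ + |ξ 1| * ‖W 1‖ := by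
            simp [norm_mul, Complex.norm_real, Real.norm_eq_abs]
    have hs0 : (0:ℝ) ≤ (ξ 0) ^ 2 + (ξ 1) ^ 2 := by positivity
    have hsq : (ξ 2) ^ 2 * ‖W 2‖ ^ 2 ≤ ((ξ 0) ^ 2 + (ξ 1) ^ 2) * (‖W 0‖ ^ 2 + ‖W 1‖ ^ 2) := by
      have hmul := mul_le_mul hn hn (by positivity) (by positivity)
      nlinarith [sq_nonneg (|ξ 0| * ‖W 1‖ - |ξ 1| * ‖W 0‖), sq_abs (ξ 0), sq_abs (ξ 1),
        sq_abs (ξ 2), abs_nonneg (ξ 0), abs_nonneg (ξ 1), norm_nonneg (W 0), norm_nonneg (W 1)]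
    have hcone2 : ε ^ 2 * ((ξ 0) ^ 2 + (ξ 1) ^ 2) ≤ (ξ 2) ^ 2 := by
      have hmul := mul_le_mul hcone hcone (by positivity) (abs_nonneg _)
      nlinarith [Real.sq_sqrt hs0, sq_abs (ξ 2)]
    rcases eq_or_lt_of_le hs0 with hseq | hspos
    · -- ξ 0 = ξ 1 = 0, and ξ ≠ 0 so ξ 2 ≠ 0
      have h0sq : (ξ 0) ^ 2 = 0 := by nlinarith [sq_nonneg (ξ 0), sq_nonneg (ξ 1)]
      have h1sq : (ξ 1) ^ 2 = 0 := by nlinarith [sq_nonneg (ξ 0), sq_nonneg (ξ 1)]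
      have h0 : ξ 0 = 0 := by
        have := sq_eq_zero_iff.1 h0sq
        exact this
      have h1 : ξ 1 = 0 := sq_eq_zero_iff.1 h1sq
      have h2 : ξ 2 ≠ 0 := by
        intro h2
        apply hξ
        ext i
        fin_cases i
        · exact h0
        · exact h1
        · exact h2
      have hW2z : W 2 = 0 := by
        have hz : (ξ 2 : ℂ) * W 2 = 0 := by rw [hW2, h0, h1]; simp
        rcases mul_eq_zero.1 hz with hc | hc
        · exact absurd (by exact_mod_cast hc) h2
        · exact hc
      have h2ε : (1:ℝ) ≤ 2 / ε ^ 2 := by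
        rw [le_div_iff₀ (by positivity)]
        nlinarith
      simp only [hW2z, norm_zero]
      nlinarith [norm_nonneg (W 0), norm_nonneg (W 1), sq_nonneg ‖W 0‖, sq_nonneg ‖W 1‖]
    · have hW2sq : ε ^ 2 * ‖W 2‖ ^ 2 ≤ ‖W 0‖ ^ 2 + ‖W 1‖ ^ 2 := by
        have hmul := mul_le_mul_of_nonneg_right hcone2 (sq_nonneg ‖W 2‖)
        have key2 : ε ^ 2 * ((ξ 0) ^ 2 + (ξ 1) ^ 2) * ‖W 2‖ ^ 2 ≤
            ((ξ 0) ^ 2 + (ξ 1) ^ 2) * (‖W 0‖ ^ 2 + ‖W 1‖ ^ 2) := le_trans hmul hsq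
        have := (mul_le_mul_iff_right₀ hspos).1 (by nlinarith : ((ξ 0) ^ 2 + (ξ 1) ^ 2) * (ε ^ 2 * ‖W 2‖ ^ 2) ≤ ((ξ 0) ^ 2 + (ξ 1) ^ 2) * (‖W 0‖ ^ 2 + ‖W 1‖ ^ 2))
        exact this
      have hε2 : (0:ℝ) < ε ^ 2 := by positivity
      rw [div_mul_eq_mul_div, le_div_iff₀ hε2]
      have hε2le : ε ^ 2 ≤ 1 := by nlinarith
      have hh0 : (0:ℝ) ≤ ‖W 0‖ ^ 2 + ‖W 1‖ ^ 2 := by positivity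
      nlinarith [hW2sq, hε2le, hh0]

/-- If `0 < ε < 1` and `v ∈ L²(ℝ³;ℝ³)` is divergence free, has finite `Ḣ^{−1/2}` norm
and its Fourier transform vanishes a.e. on `Ω_ε`, then
`‖v‖_{Ḣ^{−1/2}} ≤ (√2/ε)‖v_h‖_{Ḣ^{−1/2}}` where `v_h = (v₁,v₂,0)`. -/
theorem statement13 (ε : ℝ) (hε0 : 0 < ε) (hε1 : ε < 1)
    (v : Fin 3 → E3 → ℝ) (V : Fin 3 → E3 → ℂ)
    (hft : ∀ i, HasFT (fun x => (v i x : ℂ)) (V i))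
    (hint : Integrable (fun ξ : E3 => (2 * π * ‖ξ‖) ^ (-(1 : ℝ)) * ∑ i, ‖V i ξ‖ ^ 2))
    (hdf : ∀ᵐ ξ : E3, ∑ i, (ξ i : ℂ) * V i ξ = 0)
    (hsupp : ∀ᵐ ξ : E3, ξ ∈ Omega ε → ∀ i, V i ξ = 0) :
    Real.sqrt (∫ ξ : E3, (2 * π * ‖ξ‖) ^ (-(1 : ℝ)) * ∑ i, ‖V i ξ‖ ^ 2) ≤
      (Real.sqrt 2 / ε) *
        Real.sqrt (∫ ξ : E3, (2 * π * ‖ξ‖) ^ (-(1 : ℝ)) * (‖V 0 ξ‖ ^ 2 + ‖V 1 ξ‖ ^ 2)) := by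
  have hne : ∀ᵐ ξ : E3, ξ ≠ 0 := by
    rw [ae_iff]
    simp only [ne_eq, not_not]
    have : {ξ : E3 | ξ = 0} = {(0 : E3)} := rfl
    rw [this, measure_singleton]
  set w : E3 → ℝ := fun ξ => (2 * π * ‖ξ‖) ^ (-(1 : ℝ)) with hw
  have hw0 : ∀ ξ, 0 ≤ w ξ := fun ξ => Real.rpow_nonneg (by positivity) _
  have hae : ∀ᵐ ξ : E3, w ξ * ∑ i, ‖V i ξ‖ ^ 2 ≤
      (2 / ε ^ 2) * (w ξ * (‖V 0 ξ‖ ^ 2 + ‖V 1 ξ‖ ^ 2)) := by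
    filter_upwards [hdf, hsupp, hne] with ξ h1 h2 h3
    have hk := key ε hε0 hε1 ξ h3 (fun i => V i ξ) h1 h2
    calc w ξ * ∑ i, ‖V i ξ‖ ^ 2
        ≤ w ξ * ((2 / ε ^ 2) * (‖V 0 ξ‖ ^ 2 + ‖V 1 ξ‖ ^ 2)) :=
          mul_le_mul_of_nonneg_left hk (hw0 ξ)
      _ = (2 / ε ^ 2) * (w ξ * (‖V 0 ξ‖ ^ 2 + ‖V 1 ξ‖ ^ 2)) := by ring
  have hwm : Measurable w := by
    have : w = fun ξ : E3 => (2 * π * ‖ξ‖)⁻¹ := by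
      funext ξ
      show (2 * π * ‖ξ‖) ^ (-(1:ℝ)) = (2 * π * ‖ξ‖)⁻¹
      exact Real.rpow_neg_one _
    rw [this]
    exact (measurable_norm.const_mul (2 * π)).inv
  have hVm : ∀ i, AEStronglyMeasurable (V i) volume :=
    fun i => (hft i).2.1.aestronglyMeasurable
  have hgm : AEStronglyMeasurable
      (fun ξ : E3 => w ξ * (‖V 0 ξ‖ ^ 2 + ‖V 1 ξ‖ ^ 2)) volume :=
    hwm.aestronglyMeasurable.mul
      (((hVm 0).norm.pow 2).add ((hVm 1).norm.pow 2))
  have hg_int : Integrable (fun ξ : E3 => w ξ * (‖V 0 ξ‖ ^ 2 + ‖V 1 ξ‖ ^ 2)) := by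
    refine hint.mono' hgm (Filter.Eventually.of_forall fun ξ => ?_)
    have hb : w ξ * (‖V 0 ξ‖ ^ 2 + ‖V 1 ξ‖ ^ 2) ≤ w ξ * ∑ i, ‖V i ξ‖ ^ 2 := by
      apply mul_le_mul_of_nonneg_left _ (hw0 ξ)
      rw [Fin.sum_univ_three]
      nlinarith [sq_nonneg ‖V 2 ξ‖]
    rw [Real.norm_eq_abs, abs_of_nonneg (by positivity)]
    exact hb
  have hIle : (∫ ξ : E3, w ξ * ∑ i, ‖V i ξ‖ ^ 2) ≤
      (2 / ε ^ 2) * ∫ ξ : E3, w ξ * (‖V 0 ξ‖ ^ 2 + ‖V 1 ξ‖ ^ 2) := by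
    rw [← integral_const_mul]
    exact integral_mono_ae hint (hg_int.const_mul _) hae
  have hg0 : 0 ≤ ∫ ξ : E3, w ξ * (‖V 0 ξ‖ ^ 2 + ‖V 1 ξ‖ ^ 2) :=
    integral_nonneg fun ξ => by positivity
  calc Real.sqrt (∫ ξ : E3, w ξ * ∑ i, ‖V i ξ‖ ^ 2)
      ≤ Real.sqrt ((2 / ε ^ 2) * ∫ ξ : E3, w ξ * (‖V 0 ξ‖ ^ 2 + ‖V 1 ξ‖ ^ 2)) :=
        Real.sqrt_le_sqrt hIle
    _ = (Real.sqrt 2 / ε) *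
        Real.sqrt (∫ ξ : E3, w ξ * (‖V 0 ξ‖ ^ 2 + ‖V 1 ξ‖ ^ 2)) := by
        rw [Real.sqrt_mul (by positivity)]
        congr 1
        rw [Real.sqrt_div (by norm_num), Real.sqrt_sq hε0.le]
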